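/- arXiv:1502.06847 — 8 statements merged into one kernel-verified Lean document; each statement's English description precedes it below -/
import Mathlib

section
/- Let X be a set with a map f : X → X satisfying f ∘ f ∘ f = id, and let G be a (not necessarily abelian) group. For any map φ : X → G, the map ψ : X → G defined pointwise by ψ(p) := φ(f(p))⁻¹ · φ(p) · φ(f(f(p)))⁻¹ · φ(p) is a solution of the hexagon equation: for all p ∈ X, ψ(f(p)) · ψ(p) · ψ(f(f(p))) = e, where e is the identity of G. -/
/-- For `f : X → X` with `f³ = id` and any `φ : X → G` into a group, the map
`ψ(p) := φ(f p)⁻¹ · φ(p) · φ(f(f p))⁻¹ · φ(p)` solves the hexagon equation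
`ψ(f p) · ψ(p) · ψ(f(f p)) = e`. -/
theorem hexagon_solution_of_three_cycle {X G : Type*} [Group G]
    (f : X → X) (hf : f ∘ f ∘ f = id) (φ : X → G)
    (ψ : X → G) (hψ : ∀ p, ψ p = (φ (f p))⁻¹ * φ p * (φ (f (f p)))⁻¹ * φ p) :
    ∀ p : X, ψ (f p) * ψ p * ψ (f (f p)) = 1 := by
  intro p
  have h3 : ∀ x, f (f (f x)) = x := fun x => congrFun hf x
  simp only [hψ, h3]
  group
end

section
/- Let n ≥ 1, let G and H be additive abelian groups, and let φ : Gⁿ → H. For x = (x₁,…,xₙ) ∈ Gⁿ and 1 ≤ i ≤ n let rᵢ(x) ∈ Gⁿ denote x with its i-th coordinate replaced by −(x₁+⋯+xₙ). If φ is totally symmetric (φ(x∘π) = φ(x) for every permutation π of the coordinates), then ψ := n·φ − Σᵢ₌₁ⁿ φ∘rᵢ satisfies the generalized hexagon equation ψ(x) + Σᵢ₌₁ⁿ ψ(rᵢ(x)) = 0 for all x ∈ Gⁿ. If φ is totally skew-symmetric (φ(x∘π) = sign(π)·φ(x) for every permutation π), then ψ := n·φ + Σᵢ₌₁ⁿ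 φ∘rᵢ satisfies ψ(x) − Σᵢ₌₁ⁿ ψ(rᵢ(x)) = 0 for all x ∈ Gⁿ. -/
open Finset

/-- `replaceCoord i x` is `x` with its `i`-th coordinate replaced by minus the sum of all
coordinates of `x`. -/
def replaceCoord {n : ℕ} {G : Type*} [AddCommGroup G] (i : Fin n) (x : Fin n → G) :
    Fin n → G :=
  Function.update x i (-(∑ j, x j))

lemma sum_replaceCoord {n : ℕ} {G : Type*} [AddCommGroup G] (i : Fin n) (x : Fin n → G) :
    ∑ j, replaceCoord i x j = -(x i) := by
  unfold replaceCoord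
  rw [Finset.sum_update_of_mem (Finset.mem_univ i),
    ← Finset.add_sum_erase _ x (Finset.mem_univ i), Finset.sdiff_singleton_eq_erase]
  abel

lemma replaceCoord_self {n : ℕ} {G : Type*} [AddCommGroup G] (i : Fin n) (x : Fin n → G) :
    replaceCoord i (replaceCoord i x) = x := by
  conv_lhs => rw [replaceCoord, sum_replaceCoord, neg_neg]
  rw [replaceCoord, Function.update_idem, Function.update_eq_self]

lemma replaceCoord_ne {n : ℕ} {G : Type*} [AddCommGroup G] {i j : Fin n} (h : j ≠ i)
    (x : Fin n → G) :
    replaceCoord j (replaceCoord i x) = (replaceCoord j x) ∘ (Equiv.swap i j) := by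
  funext k
  simp only [Function.comp_apply]
  conv_lhs => rw [replaceCoord, sum_replaceCoord, neg_neg]
  rcases eq_or_ne k i with rfl | hki
  · rw [Function.update_of_ne (Ne.symm h) _ _, replaceCoord, Function.update_self,
      Equiv.swap_apply_left, replaceCoord, Function.update_self]
  rcases eq_or_ne k j with rfl | hkj
  · rw [Function.update_self, Equiv.swap_apply_right, replaceCoord,
      Function.update_of_ne (Ne.symm h)]
  · rw [Function.update_of_ne hkj, replaceCoord, Function.update_of_ne hki,
      Equiv.swap_apply_of_ne_of_ne hki hkj, replaceCoord, Function.update_of_ne hkj]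

/-- If `φ : Gⁿ → H` is totally symmetric then `ψ := n·φ - Σᵢ φ∘rᵢ` solves the generalized
hexagon equation `ψ + Σᵢ ψ∘rᵢ = 0`; if `φ` is totally skew-symmetric then
`ψ := n·φ + Σᵢ φ∘rᵢ` solves `ψ - Σᵢ ψ∘rᵢ = 0`. -/
theorem generalized_hexagon_symmetrization {n : ℕ} (hn : 1 ≤ n)
    {G H : Type*} [AddCommGroup G] [AddCommGroup H] (φ : (Fin n → G) → H) :
    ((∀ (π : Equiv.Perm (Fin n)) (x : Fin n → G), φ (x ∘ π) = φ x) →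
      ∀ x : Fin n → G,
        (fun y => n • φ y - ∑ i, φ (replaceCoord i y)) x +
          ∑ i, (fun y => n • φ y - ∑ i, φ (replaceCoord i y)) (replaceCoord i x) = 0) ∧
    ((∀ (π : Equiv.Perm (Fin n)) (x : Fin n → G),
        φ (x ∘ π) = (Equiv.Perm.sign π : ℤ) • φ x) →
      ∀ x : Fin n → G,
        (fun y => n • φ y + ∑ i, φ (replaceCoord i y)) x -
          ∑ i, (fun y => n • φ y + ∑ i, φ (replaceCoord i y)) (replaceCoord i x) = 0) := by
  constructor
  · intro hsym x
    have key : ∀ i : Fin n, ∑ j, φ (replaceCoord j (replaceCoord i x)) =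
        φ x + (∑ j, φ (replaceCoord j x) - φ (replaceCoord i x)) := by
      intro i
      rw [← Finset.add_sum_erase _ _ (Finset.mem_univ i), replaceCoord_self,
        Finset.sum_congr rfl (fun j hj => by
          rw [replaceCoord_ne (Finset.ne_of_mem_erase hj) x, hsym]),
        Finset.sum_erase_eq_sub (Finset.mem_univ i)]
    simp only [key, Finset.sum_add_distrib, Finset.sum_sub_distrib, Finset.sum_const,
      ← Finset.smul_sum, Finset.card_univ, Fintype.card_fin]
    abel
  · intro hskew x
    have key : ∀ i : Fin n, ∑ j, φ (replaceCoord j (replaceCoord i x)) =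
        φ x - (∑ j, φ (replaceCoord j x) - φ (replaceCoord i x)) := by
      intro i
      rw [← Finset.add_sum_erase _ _ (Finset.mem_univ i), replaceCoord_self,
        Finset.sum_congr rfl (fun j hj => by
          rw [replaceCoord_ne (Finset.ne_of_mem_erase hj) x, hskew,
            Equiv.Perm.sign_swap (Ne.symm (Finset.ne_of_mem_erase hj))])]
      simp only [Units.val_neg, Units.val_one, neg_smul, one_smul]
      rw [Finset.sum_neg_distrib, Finset.sum_erase_eq_sub (Finset.mem_univ i)]
      abel
    simp only [key, Finset.sum_add_distrib, Finset.sum_sub_distrib, Finset.sum_const,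
      ← Finset.smul_sum, Finset.card_univ, Fintype.card_fin]
    abel
end

section
/- Let G be any (not necessarily abelian) group and n ≥ 1. The map P : Gⁿ → Gⁿ defined by P(x₁,…,xₙ) := (x₂⁻¹ ∘ x₃⁻¹ ∘ ⋯ ∘ xₙ⁻¹ ∘ x₁⁻¹, x₃, x₄, …, xₙ, x₁) satisfies P^{n+1} = id, i.e. P represents the cyclic group ℤ/(n+1) by automorphisms of the set Gⁿ. -/
/-- The map `P(x₁,…,xₙ) = (x₂⁻¹∘x₃⁻¹∘⋯∘xₙ⁻¹∘x₁⁻¹, x₃, …, xₙ, x₁)` (0-indexed: output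
coordinate `k ≠ 0` is `x (k+1 mod n)`, coordinate `0` is the ordered product
`(x 1)⁻¹ * (x 2)⁻¹ * ⋯ * (x (n-1))⁻¹ * (x 0)⁻¹`). -/
def cycleMap (n : ℕ) [NeZero n] {G : Type*} [Group G] (x : Fin n → G) : Fin n → G :=
  fun k => if k = 0 then (List.ofFn fun i : Fin n => (x (i + 1))⁻¹).prod else x (k + 1)

lemma cycleMap_apply_zero (n : ℕ) [NeZero n] {G : Type*} [Group G] (x : Fin n → G) :
    cycleMap n x 0 = (List.ofFn fun i : Fin n => (x (i + 1))⁻¹).prod := by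
  simp [cycleMap]

lemma cycleMap_apply_ne_zero (n : ℕ) [NeZero n] {G : Type*} [Group G] (x : Fin n → G)
    (k : Fin n) (hk : k ≠ 0) : cycleMap n x k = x (k + 1) := by
  simp [cycleMap, hk]

/-- The embedding `φ(x) = (x₀, x_{n-1}, …, x₁, s)` of `Gⁿ` into `G^{n+1}`, where
`s` is the first coordinate that `cycleMap` would produce. -/
def phiMap (m : ℕ) {G : Type*} [Group G] (x : Fin (m + 1) → G) : Fin (m + 2) → G :=
  fun j => if h : (j : ℕ) < m + 1 then x (-(⟨j, h⟩ : Fin (m + 1)))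
    else (List.ofFn fun i : Fin (m + 1) => (x (i + 1))⁻¹).prod

lemma phiMap_injective (m : ℕ) {G : Type*} [Group G] :
    Function.Injective (phiMap (G := G) m) := by
  intro x y h
  funext i
  have h1 := congrFun h (Fin.castSucc (-i))
  have hlt : ((Fin.castSucc (-i) : Fin (m + 2)) : ℕ) < m + 1 := (-i).isLt
  simp only [phiMap, dif_pos hlt] at h1
  have he : (⟨((Fin.castSucc (-i) : Fin (m + 2)) : ℕ), hlt⟩ : Fin (m + 1)) = -i := rfl
  rw [he, neg_neg] at h1
  exact h1

lemma prodInv_step (m : ℕ) {G : Type*} [Group G] (x : Fin (m + 1) → G) :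
    (List.ofFn fun i : Fin (m + 1) => ((cycleMap (m + 1) x) (i + 1))⁻¹).prod = x 1 := by
  set s : G := (List.ofFn fun i : Fin (m + 1) => (x (i + 1))⁻¹).prod with hs
  have hsplit : s = (x 1)⁻¹ * (List.ofFn fun i : Fin m => (x (i.succ + 1))⁻¹).prod := by
    rw [hs, List.ofFn_succ, List.prod_cons]
    norm_num
  have hL : (List.ofFn fun i : Fin (m + 1) => ((cycleMap (m + 1) x) (i + 1))⁻¹) =
      (List.ofFn fun i : Fin m => (x (i.succ + 1))⁻¹).concat s⁻¹ := by
    rw [List.ofFn_succ']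
    congr 1
    · apply congrArg List.ofFn
      funext i
      rw [Fin.coeSucc_eq_succ, cycleMap_apply_ne_zero _ _ _ (Fin.succ_ne_zero i)]
    · have hlast : (Fin.last m : Fin (m + 1)) + 1 = 0 := by
        apply Fin.ext
        simp [Fin.add_def]
      rw [hlast, cycleMap_apply_zero, ← hs]
  rw [hL, List.prod_concat]
  have h3 : (List.ofFn fun i : Fin m => (x (i.succ + 1))⁻¹).prod = x 1 * s := by
    rw [hsplit]; group
  rw [h3]; group

open Fin.CommRing

lemma phiMap_step (m : ℕ) {G : Type*} [Group G] (x : Fin (m + 1) → G) (j : Fin (m + 2)) :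
    phiMap m (cycleMap (m + 1) x) j = phiMap m x (j - 1) := by
  rcases Nat.lt_or_ge (j : ℕ) (m + 1) with hj | hj
  · rcases Nat.eq_zero_or_pos (j : ℕ) with hj0 | hj0
    · -- j = 0 : LHS is the new product coordinate, RHS is φ x at last position
      have hje : j = 0 := Fin.ext (by simpa using hj0)
      subst hje
      have hsub : ((0 : Fin (m + 2)) - 1 : Fin (m + 2)).val = m + 1 := by
        rw [Fin.sub_def]; simp
      simp only [phiMap, dif_pos (show ((0 : Fin (m+2)) : ℕ) < m + 1 by simp),
        dif_neg (by omega : ¬ ((0 : Fin (m+2)) - 1 : Fin (m+2)).val < m + 1)]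
      have h0 : (⟨((0 : Fin (m + 2)) : ℕ), by simp⟩ : Fin (m + 1)) = 0 := rfl
      rw [h0, neg_zero, cycleMap_apply_zero]
    · -- 1 ≤ j.val ≤ m
      have hjlt := j.isLt
      have hsub : ((j - 1 : Fin (m + 2))).val = (j : ℕ) - 1 := by
        rw [Fin.sub_def]
        simp only [Fin.val_one]
        rw [show m + 2 - 1 + (j : ℕ) = ((j : ℕ) - 1) + (m + 2) by omega,
          Nat.add_mod_right]
        exact Nat.mod_eq_of_lt (by omega)
      have hlt' : ((j - 1 : Fin (m + 2))).val < m + 1 := by omega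
      simp only [phiMap, dif_pos hj, dif_pos hlt']
      have hne : -(⟨(j : ℕ), hj⟩ : Fin (m + 1)) ≠ 0 := by
        rw [neg_ne_zero]
        intro hc
        exact absurd (congrArg Fin.val hc) (by show ¬ (j : ℕ) = 0; omega)
      rw [cycleMap_apply_ne_zero _ _ _ hne]
      congr 1
      rw [show (⟨((j - 1 : Fin (m + 2))).val, hlt'⟩ : Fin (m + 1))
            = (((j : ℕ) - 1 : ℕ) : Fin (m + 1)) from
          Fin.ext (by rw [Fin.val_cast_of_lt (by omega)]; exact hsub),
        show (⟨(j : ℕ), hj⟩ : Fin (m + 1)) = ((j : ℕ) : Fin (m + 1)) from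
          Fin.ext (by rw [Fin.val_cast_of_lt hj])]
      rw [Nat.cast_sub (by omega : 1 ≤ (j : ℕ))]
      push_cast
      ring
  · -- j = last : LHS is new product coordinate s', RHS is x 1
    have hje : (j : ℕ) = m + 1 := by omega
    have hsub : ((j - 1 : Fin (m + 2))).val = m := by
      rw [Fin.sub_def]
      simp only [Fin.val_one, hje]
      rw [show m + 2 - 1 + (m + 1) = m + (m + 2) by omega, Nat.add_mod_right]
      exact Nat.mod_eq_of_lt (by omega)
    have hlt' : ((j - 1 : Fin (m + 2))).val < m + 1 := by omega
    simp only [phiMap, dif_neg (by omega : ¬ (j : ℕ) < m + 1), dif_pos hlt']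
    rw [prodInv_step]
    congr 1
    rw [show (⟨((j - 1 : Fin (m + 2))).val, hlt'⟩ : Fin (m + 1)) = ((m : ℕ) : Fin (m + 1)) from
      Fin.ext (by rw [Fin.val_cast_of_lt (by omega)]; exact hsub)]
    have h4 : ((m : ℕ) : Fin (m + 1)) + 1 = 0 := by
      have h5 := Fin.natCast_self (m + 1)
      push_cast at h5
      exact h5
    exact eq_neg_of_add_eq_zero_right h4

lemma phiMap_iter (m k : ℕ) {G : Type*} [Group G] (x : Fin (m + 1) → G) (j : Fin (m + 2)) :
    phiMap m ((cycleMap (m + 1))^[k] x) j = phiMap m x (j - (k : Fin (m + 2))) := by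
  induction k generalizing x j with
  | zero => simp
  | succ k ih =>
    rw [Function.iterate_succ_apply, ih, phiMap_step]
    congr 1
    push_cast
    ring

/-- `P` satisfies `P^{n+1} = id`, hence represents `ℤ/(n+1)` on `Gⁿ`. -/
theorem cycleMap_order (n : ℕ) [NeZero n] {G : Type*} [Group G] :
    (cycleMap n (G := G))^[n + 1] = id := by
  obtain ⟨m, rfl⟩ := Nat.exists_eq_succ_of_ne_zero (NeZero.ne n)
  funext x
  apply phiMap_injective m
  funext j
  rw [phiMap_iter]
  congr 1
  have h0 : ((m + 1 + 1 : ℕ) : Fin (m + 2)) = 0 := by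
    apply Fin.ext
    simp
  rw [h0, sub_zero]
end

section
/- Let G be an additive abelian group, [·,·] : G × G → G a map that is a group homomorphism in each argument, and n ≥ 2. Define, for a totally symmetric map ψ : Gⁿ → G, (∂ψ)(x₁,…,xₙ) := [x₁+⋯+xₙ, ψ(x₁,…,xₙ) + Σᵢ₌₁ⁿ ψ(x₁,…,x_{i−1}, −(x₁+⋯+xₙ), x_{i+1},…,xₙ)]. Then ∂ψ is again totally symmetric and ∂ is a square-zero map on totally symmetric maps: ∂(∂ψ) = 0 for every totally symmetric ψ : Gⁿ → G. -/
open Finset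

/-- The differential `∂` associated to a biadditive bracket:
`(∂ψ)(x₁,…,xₙ) = [x₁+⋯+xₙ, ψ(x) + Σᵢ ψ(x with i-th coordinate replaced by -(x₁+⋯+xₙ))]`. -/
def hexDiff {n : ℕ} {G : Type*} [AddCommGroup G] (br : G → G → G)
    (ψ : (Fin n → G) → G) : (Fin n → G) → G :=
  fun x => br (∑ i, x i)
    (ψ x + ∑ i : Fin n, ψ (Function.update x i (-(∑ j, x j))))

/-- If `[·,·]` is additive in each argument and `n ≥ 2`, then `∂` preserves total symmetry
and squares to zero on totally symmetric maps. -/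
theorem hexDiff_squares_to_zero {n : ℕ} (hn : 2 ≤ n) {G : Type*} [AddCommGroup G]
    (br : G → G → G)
    (hbl : ∀ a b c : G, br (a + b) c = br a c + br b c)
    (hbr : ∀ a b c : G, br a (b + c) = br a b + br a c)
    (ψ : (Fin n → G) → G)
    (hsym : ∀ (π : Equiv.Perm (Fin n)) (x : Fin n → G), ψ (x ∘ π) = ψ x) :
    (∀ (π : Equiv.Perm (Fin n)) (x : Fin n → G), hexDiff br ψ (x ∘ π) = hexDiff br ψ x) ∧
      hexDiff br (hexDiff br ψ) = 0 := by
  -- basic consequences of biadditivity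
  have br_zero_left : ∀ c : G, br 0 c = 0 := by
    intro c
    have h := hbl 0 0 c
    rw [add_zero] at h
    have h2 : br 0 c + 0 = br 0 c + br 0 c := by rw [add_zero]; exact h
    exact (add_left_cancel h2).symm
  have br_zero_right : ∀ a : G, br a 0 = 0 := by
    intro a
    have h := hbr a 0 0
    rw [add_zero] at h
    have h2 : br a 0 + 0 = br a 0 + br a 0 := by rw [add_zero]; exact h
    exact (add_left_cancel h2).symm
  have br_sum_left : ∀ (f : Fin n → G) (c : G),
      br (∑ i, f i) c = ∑ i, br (f i) c := by
    intro f c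
    induction (Finset.univ : Finset (Fin n)) using Finset.cons_induction with
    | empty => simpa using br_zero_left c
    | cons a t ha ih => rw [Finset.sum_cons, Finset.sum_cons, hbl, ih]
  -- symmetry part
  have hsymD : ∀ (π : Equiv.Perm (Fin n)) (x : Fin n → G),
      hexDiff br ψ (x ∘ π) = hexDiff br ψ x := by
    intro π x
    unfold hexDiff
    have hsumc : (∑ i, (x ∘ π) i) = ∑ i, x i := Equiv.sum_comp π x
    rw [hsumc, hsym π x]
    congr 1
    congr 1
    rw [← Equiv.sum_comp π (fun i => ψ (Function.update x i (-(∑ j, x j))))]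
    refine Finset.sum_congr rfl fun i _ => ?_
    rw [← hsym π (Function.update x (π i) (-(∑ j, x j)))]
    congr 1
    rw [Function.update_comp_equiv x π (π i) (-(∑ j, x j)), Equiv.symm_apply_apply]
  refine ⟨hsymD, ?_⟩
  funext x
  show br (∑ i, x i)
      (hexDiff br ψ x + ∑ i : Fin n, hexDiff br ψ (Function.update x i (-(∑ j, x j)))) = 0
  set s := ∑ i, x i with hs
  set A := ψ x + ∑ i, ψ (Function.update x i (-s)) with hA
  -- sum of an updated tuple
  have upd_sum : ∀ (i : Fin n) (c : G), (∑ j, Function.update x i c j) = c + (s - x i) := by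
    intro i c
    rw [Finset.sum_update_of_mem (Finset.mem_univ i), ← Finset.erase_eq]
    congr 1
    rw [eq_sub_iff_add_eq, hs]
    exact Finset.sum_erase_add Finset.univ x (Finset.mem_univ i)
  have upd_sum' : ∀ i : Fin n, (∑ j, Function.update x i (-s) j) = -(x i) := by
    intro i; rw [upd_sum]; abel
  -- the inner bracket-argument is always A
  have inner_eq : ∀ i : Fin n, hexDiff br ψ (Function.update x i (-s)) = br (-(x i)) A := by
    intro i
    unfold hexDiff
    rw [upd_sum' i, neg_neg]
    congr 1
    have hterm : ∀ j : Fin n, ψ (Function.update (Function.update x i (-s)) j (x i)) =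
        if j = i then ψ x else ψ (Function.update x j (-s)) := by
      intro j
      by_cases hji : j = i
      · subst hji
        rw [Function.update_idem, Function.update_eq_self, if_pos rfl]
      · rw [if_neg hji, ← hsym (Equiv.swap i j) (Function.update x j (-s))]
        congr 1
        funext k
        simp only [Function.comp_apply, Function.update_apply, Equiv.swap_apply_def]
        rcases eq_or_ne k i with rfl | hki
        · simp [hji, Ne.symm hji]
        · rcases eq_or_ne k j with rfl | hkj
          · simp [hji, Ne.symm hji, hki]
          · simp [hki, hkj]
    rw [Finset.sum_congr rfl (fun j _ => hterm j)]
    rw [← Finset.sum_erase_add Finset.univ _ (Finset.mem_univ i), if_pos rfl]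
    have herase : (∑ j ∈ Finset.univ.erase i, if j = i then ψ x else ψ (Function.update x j (-s)))
        = ∑ j ∈ Finset.univ.erase i, ψ (Function.update x j (-s)) := by
      refine Finset.sum_congr rfl fun j hj => ?_
      rw [if_neg (Finset.ne_of_mem_erase hj)]
    rw [herase, hA, ← Finset.sum_erase_add Finset.univ _ (Finset.mem_univ i)]
    abel
  have houter : hexDiff br ψ x = br s A := rfl
  rw [Finset.sum_congr rfl (fun i _ => inner_eq i), houter]
  have hsum_br : (∑ i, br (-(x i)) A) = br (-s) A := by
    rw [← br_sum_left (fun i => -(x i)) A, ← Finset.sum_neg_distrib]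
  rw [hsum_br, ← hbl, add_neg_cancel, br_zero_left]
  exact br_zero_right s
end

section
/- Let (X, τ) be a torsor and define f₁, f₂, f₃ : X³ → X³ by f₁(x,y,z) = (τ(x,y,z), z, y), f₂(x,y,z) = (y, x, τ(x,y,z)) and f₃(x,y,z) = (z, τ(x,y,z), x). Then f₁ ∘ f₁ = id, f₂ ∘ f₂ = id, and f₁ ∘ f₂ = f₂ ∘ f₁ = f₃; consequently {id, f₁, f₂, f₃} realizes the Klein four-group as bijections of X³. -/
/-- For a torsor `(X,τ)`, the maps `f₁(x,y,z) = (τ(x,y,z),z,y)`,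
`f₂(x,y,z) = (y,x,τ(x,y,z))` and `f₃(x,y,z) = (z,τ(x,y,z),x)` satisfy `f₁² = f₂² = id`
and `f₁∘f₂ = f₂∘f₁ = f₃`, so `{id, f₁, f₂, f₃}` realizes the Klein four-group as
bijections of `X³`. -/
theorem torsor_klein_four {X : Type*} [Nonempty X]
    (τ : X → X → X → X)
    (h1 : ∀ x y : X, τ x y y = x)
    (h2 : ∀ x y : X, τ y y x = x)
    (h3 : ∀ x y z v w : X, τ (τ x y z) v w = τ x y (τ z v w))
    (f1 f2 f3 : X × X × X → X × X × X)
    (hf1 : ∀ x y z : X, f1 (x, y, z) = (τ x y z, z, y))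
    (hf2 : ∀ x y z : X, f2 (x, y, z) = (y, x, τ x y z))
    (hf3 : ∀ x y z : X, f3 (x, y, z) = (z, τ x y z, x)) :
    f1 ∘ f1 = id ∧ f2 ∘ f2 = id ∧ f1 ∘ f2 = f3 ∧ f2 ∘ f1 = f3 := by
  have key1 : ∀ x y z : X, τ (τ x y z) z y = x := fun x y z => by
    rw [h3, h2, h1]
  have key2 : ∀ x y z : X, τ y x (τ x y z) = z := fun x y z => by
    rw [← h3, h1, h2]
  refine ⟨funext fun ⟨x, y, z⟩ => ?_, funext fun ⟨x, y, z⟩ => ?_,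
    funext fun ⟨x, y, z⟩ => ?_, funext fun ⟨x, y, z⟩ => ?_⟩
  · simp [hf1, key1]
  · simp [hf2, key2]
  · simp [hf1, hf2, hf3, key2]
  · simp [hf1, hf2, hf3, key1]
end

section
/- Let (X, τ) be a torsor, (G,+,0) an additive abelian group with a biadditive map [·,·] : G × G → G, and fix a sign ε ∈ {+1, −1}. Suppose γ : X³ → G satisfies γ∘f₁ + γ∘f₂ = 0. Then the map ∂^γ defined on maps φ : X³ → G by ∂^γφ := [γ, φ∘f₁ + ε·(φ∘f₂)] (pointwise) squares to zero, ∂^γ(∂^γφ) = 0 for all φ, and moreover ∂^γφ itself satisfies the same symmetry as in the ε = +1 hypothesis shape: (∂^γφ)∘f₁ + ε·(∂^γφ)∘f₂ = 0. -/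
/-- For a torsor `(X,τ)` with the involutions `f₁, f₂` of `X³`, an abelian group `G` with
a biadditive bracket, a sign `ε = ±1` and `γ : X³ → G` with `γ∘f₁ + γ∘f₂ = 0`, the map
`∂^γφ := [γ, φ∘f₁ + ε·(φ∘f₂)]` squares to zero and satisfies
`(∂^γφ)∘f₁ + ε·(∂^γφ)∘f₂ = 0`. -/
theorem torsor_gamma_diff_squares_to_zero {X G : Type*} [Nonempty X] [AddCommGroup G]
    (τ : X → X → X → X)
    (h1 : ∀ x y : X, τ x y y = x)
    (h2 : ∀ x y : X, τ y y x = x)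
    (h3 : ∀ x y z v w : X, τ (τ x y z) v w = τ x y (τ z v w))
    (f1 f2 : X × X × X → X × X × X)
    (hf1 : ∀ x y z : X, f1 (x, y, z) = (τ x y z, z, y))
    (hf2 : ∀ x y z : X, f2 (x, y, z) = (y, x, τ x y z))
    (br : G → G → G)
    (hbl : ∀ a b c : G, br (a + b) c = br a c + br b c)
    (hbr : ∀ a b c : G, br a (b + c) = br a b + br a c)
    (ε : ℤ) (hε : ε = 1 ∨ ε = -1)
    (γ : X × X × X → G) (hγ : ∀ p, γ (f1 p) + γ (f2 p) = 0)
    (D : (X × X × X → G) → (X × X × X → G))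
    (hD : ∀ (φ : X × X × X → G) (p : X × X × X),
      D φ p = br (γ p) (φ (f1 p) + ε • φ (f2 p))) :
    ∀ φ : X × X × X → G,
      D (D φ) = 0 ∧ ∀ p : X × X × X, D φ (f1 p) + ε • D φ (f2 p) = 0 := by
  have br0r : ∀ a : G, br a 0 = 0 := by
    intro a
    have h := hbr a 0 0
    rw [add_zero] at h
    exact (left_eq_add.mp h)
  have br0l : ∀ b : G, br 0 b = 0 := by
    intro b
    have h := hbl 0 0 b
    rw [add_zero] at h
    exact (left_eq_add.mp h)
  have brneg : ∀ a b : G, br (-a) b = - br a b := by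
    intro a b
    have h := hbl a (-a) b
    rw [add_neg_cancel, br0l] at h
    exact eq_neg_of_add_eq_zero_right h.symm
  have key : ∀ (φ : X × X × X → G) (p : X × X × X),
      D φ (f1 p) + ε • D φ (f2 p) = 0 := by
    intro φ p
    obtain ⟨x, y, z⟩ := p
    have e1 : f1 (x, y, z) = (τ x y z, z, y) := hf1 x y z
    have e2 : f2 (x, y, z) = (y, x, τ x y z) := hf2 x y z
    have t1 : τ (τ x y z) z y = x := by rw [h3, h2, h1]
    have t2 : τ y x (τ x y z) = z := by rw [← h3, h1, h2]
    have e11 : f1 (τ x y z, z, y) = (x, y, z) := by rw [hf1, t1]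
    have e21 : f2 (τ x y z, z, y) = (z, τ x y z, x) := by rw [hf2, t1]
    have e12 : f1 (y, x, τ x y z) = (z, τ x y z, x) := by rw [hf1, t2]
    have e22 : f2 (y, x, τ x y z) = (x, y, z) := by rw [hf2, t2]
    have hg : γ (y, x, τ x y z) = - γ (τ x y z, z, y) := by
      have h := hγ (x, y, z)
      rw [e1, e2] at h
      exact eq_neg_of_add_eq_zero_right h
    rw [hD, hD, e1, e2, e11, e21, e12, e22, hg, brneg]
    rcases hε with h | h <;> subst h
    · rw [one_smul, one_smul, one_smul, add_comm (φ (z, τ x y z, x))]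
      abel
    · simp only [neg_one_zsmul, neg_neg]
      rw [← hbr]
      rw [show φ (x, y, z) + -φ (z, τ x y z, x) + (φ (z, τ x y z, x) + -φ (x, y, z))
        = 0 by abel, br0r]
  intro φ
  refine ⟨?_, key φ⟩
  funext p
  rw [hD, key φ p, br0r]
  rfl
end

section
/- Let (X, τ) be a torsor and (G, +, [·,·]) an abelian group whose biadditive bracket [·,·] is moreover skew-symmetric and satisfies the Jacobi identity (a Lie bracket). Let γ : X³ → G satisfy γ∘f₁ + γ∘f₂ = 0 and define ∂^γφ := [γ, φ∘f₁ + φ∘f₂] pointwise for φ : X³ → G. Then for all maps φ, ϕ : X³ → G the modified Leibniz rule holds: ∂^γ[φ, ϕ + ϕ∘f₃] = ∂^γ[φ + φ∘f₃, ϕ] = ∂^{∂^γφ}ϕ − ∂^{∂^γϕ}φ, where the brackets of G-valued maps are taken pointwise and the superscript maps ∂^γφ, ∂^γϕ again satisfy the symmetry (·)∘f₁ + (·)∘f₂ = 0 so that the right-hand side is well defined. -/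
/-- Modified Leibniz rule: for a torsor `(X,τ)` with the maps `f₁, f₂, f₃` of `X³`, an
abelian group `G` with a biadditive skew-symmetric bracket satisfying the Jacobi identity,
and `γ : X³ → G` with `γ∘f₁ + γ∘f₂ = 0`, setting `∂^γφ := [γ, φ∘f₁ + φ∘f₂]` we have
`∂^γ[φ, ϕ + ϕ∘f₃] = ∂^γ[φ + φ∘f₃, ϕ] = ∂^{∂^γφ}ϕ − ∂^{∂^γϕ}φ`. -/
theorem torsor_modified_leibniz {X G : Type*} [Nonempty X] [AddCommGroup G]
    (τ : X → X → X → X)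
    (h1 : ∀ x y : X, τ x y y = x)
    (h2 : ∀ x y : X, τ y y x = x)
    (h3 : ∀ x y z v w : X, τ (τ x y z) v w = τ x y (τ z v w))
    (f1 f2 f3 : X × X × X → X × X × X)
    (hf1 : ∀ x y z : X, f1 (x, y, z) = (τ x y z, z, y))
    (hf2 : ∀ x y z : X, f2 (x, y, z) = (y, x, τ x y z))
    (hf3 : ∀ x y z : X, f3 (x, y, z) = (z, τ x y z, x))
    (br : G → G → G)
    (hbl : ∀ a b c : G, br (a + b) c = br a c + br b c)
    (hbr : ∀ a b c : G, br a (b + c) = br a b + br a c)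
    (hskew : ∀ a b : G, br a b = -br b a)
    (hjac : ∀ a b c : G, br a (br b c) + br b (br c a) + br c (br a b) = 0)
    (D : (X × X × X → G) → (X × X × X → G) → (X × X × X → G))
    (hD : ∀ (γ' φ : X × X × X → G) (p : X × X × X),
      D γ' φ p = br (γ' p) (φ (f1 p) + φ (f2 p)))
    (γ : X × X × X → G) (hγ : ∀ p, γ (f1 p) + γ (f2 p) = 0) :
    ∀ φ ϕ : X × X × X → G,
      D γ (fun p => br (φ p) (ϕ p + ϕ (f3 p))) =
          D γ (fun p => br (φ p + φ (f3 p)) (ϕ p)) ∧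
        D γ (fun p => br (φ p) (ϕ p + ϕ (f3 p))) =
          fun p => D (D γ φ) ϕ p - D (D γ ϕ) φ p := by

  have hz : ∀ a : G, br a 0 = 0 := by
    intro a
    have h := hbr a 0 0
    rw [add_zero] at h
    exact (left_eq_add.mp h)
  have hneg : ∀ a b : G, br a (-b) = -br a b := by
    intro a b
    have h := hbr a b (-b)
    rw [add_neg_cancel, hz] at h
    exact eq_neg_of_add_eq_zero_left (by rw [add_comm]; exact h.symm)
  have key : ∀ a b c : G, br a (br b c) = br (br a b) c - br (br a c) b := by
    intro a b c
    have h := hjac a b c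
    rw [hskew c a, hneg, hskew b (br a c), hskew c (br a b), neg_neg] at h
    rw [eq_sub_iff_add_eq]
    exact add_neg_eq_zero.mp h
  have hc1 : ∀ x y z : X, τ (τ x y z) z y = x := by
    intro x y z; rw [h3, h2, h1]
  have hc2 : ∀ x y z : X, τ y x (τ x y z) = z := by
    intro x y z; rw [← h3, h1, h2]
  have main1 : ∀ g a b c d : G,
      br g (br a (c + d) + br b (d + c)) = br g (br (a + b) c + br (b + a) d) := by
    intro g a b c d
    congr 1
    simp only [hbl, hbr]
    abel
  have main2 : ∀ g a b c d : G,
      br g (br a (c + d) + br b (d + c)) =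
        br (br g (a + b)) (c + d) - br (br g (c + d)) (a + b) := by
    intro g a b c d
    rw [add_comm d c, ← hbl, key]
  intro φ ϕ
  constructor
  · funext p
    obtain ⟨x, y, z⟩ := p
    simp only [hD, hf1, hf2, hf3, hc1, hc2]
    exact main1 _ _ _ _ _
  · funext p
    obtain ⟨x, y, z⟩ := p
    simp only [hD, hf1, hf2, hf3, hc1, hc2]
    exact main2 _ _ _ _ _
end

section
/- Let (X, τ) be a torsor. The map ι : X³ → X³ defined by ι(x,y,z) := (τ(y,x,z), x, τ(τ(y,x,z), x, y)) is a 3-cycle: its second iterate is ι²(x,y,z) = (y, τ(y,x,z), τ(y, τ(y,x,z), x)) and ι³ = id. -/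
/-- For a torsor `(X,τ)`, the map `ι(x,y,z) = (τ(y,x,z), x, τ(τ(y,x,z),x,y))` is a
3-cycle: `ι²(x,y,z) = (y, τ(y,x,z), τ(y,τ(y,x,z),x))` and `ι³ = id`. -/
theorem torsor_three_cycle {X : Type*} [Nonempty X]
    (τ : X → X → X → X)
    (h1 : ∀ x y : X, τ x y y = x)
    (h2 : ∀ x y : X, τ y y x = x)
    (h3 : ∀ x y z v w : X, τ (τ x y z) v w = τ x y (τ z v w))
    (ι : X × X × X → X × X × X)
    (hι : ∀ x y z : X, ι (x, y, z) = (τ y x z, x, τ (τ y x z) x y)) :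
    (∀ x y z : X, ι^[2] (x, y, z) = (y, τ y x z, τ y (τ y x z) x)) ∧ ι^[3] = id := by
  have key : ∀ a b c : X, τ a b (τ b a c) = c := by
    intro a b c
    rw [← h3, h1, h2]
  have step2 : ∀ x y z : X, ι (ι (x, y, z)) = (y, τ y x z, τ y (τ y x z) x) := by
    intro x y z
    rw [hι, hι, key]
  constructor
  · intro x y z
    simpa [Function.iterate_succ, Function.comp] using step2 x y z
  · funext p
    obtain ⟨x, y, z⟩ := p
    show ι (ι (ι (x, y, z))) = (x, y, z)
    rw [step2, hι, key, key]
end
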